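/- Let X₁, …, Xₙ be finite types, let X = X₁ × ⋯ × Xₙ, let P_Π(X) ⊆ Δ_X be the set of product measures on X, and for each i let KB_i ⊆ Δ_{X_i} be a constraint and S_i ⊆ X_i a set. Then every measure μ' in the relative-entropy projection P_Π(X)|(⋂_{i=1}^n {μ ∈ Δ_X : μ_{X_i} ∈ KB_i}) satisfies μ'(S₁ × ⋯ × Sₙ) = ∏_{i=1}^n μ'_{X_i}(S_i). -/

import Mathlib

/-- A probability measure (probability mass function) on a finite type. -/
structure PM (X : Type) [Fintype X] where
  pm : X → ℝ
  nonneg : ∀ x, 0 ≤ pm x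
  total : ∑ x, pm x = 1

namespace PM

variable {X Y : Type} [Fintype X] [Fintype Y]

/-- The probability of a set `S`: `μ(S) = ∑_{x ∈ S} μ(x)`. -/
noncomputable def prob (μ : PM X) (S : Set X) : ℝ := ∑ x, S.indicator μ.pm x

lemma prob_nonneg (μ : PM X) (S : Set X) : 0 ≤ μ.prob S :=
  Finset.sum_nonneg fun x _ => Set.indicator_apply_nonneg fun _ => μ.nonneg x

/-- Marginal on the first component: `μ_X(A) = μ(A × Y)`. -/
noncomputable def margFst (μ : PM (X × Y)) : PM X where
  pm x := ∑ y, μ.pm (x, y)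
  nonneg x := Finset.sum_nonneg fun y _ => μ.nonneg (x, y)
  total := by rw [← μ.total, ← Fintype.sum_prod_type]

/-- Marginal on the second component: `μ_Y(B) = μ(X × B)`. -/
noncomputable def margSnd (μ : PM (X × Y)) : PM Y where
  pm y := ∑ x, μ.pm (x, y)
  nonneg y := Finset.sum_nonneg fun x _ => μ.nonneg (x, y)
  total := by rw [← μ.total, ← Fintype.sum_prod_type_right]

/-- Conditioning `μ|S`; the junk value `μ` is returned when `μ(S) = 0`. -/
noncomputable def cond (μ : PM X) (S : Set X) : PM X :=
  if h : 0 < μ.prob S then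
    { pm := fun x => S.indicator μ.pm x / μ.prob S
      nonneg := fun x =>
        div_nonneg (Set.indicator_apply_nonneg fun _ => μ.nonneg x) (le_of_lt h)
      total := by
        rw [← Finset.sum_div]
        exact div_self (ne_of_gt h) }
  else μ

end PM

open PM

/-- An `X`-inference procedure: a partial map on sets of probability measures. -/
structure InfProc (X : Type) [Fintype X] where
  dom : Set (Set (PM X))
  map : Set (PM X) → Set (PM X)
  map_subset : ∀ A ∈ dom, map A ⊆ A
  map_empty_iff : ∀ A ∈ dom, (map A = ∅ ↔ A = ∅)

/-- `KB ⊢_I θ`. -/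
def Infers {X : Type} [Fintype X] (I : InfProc X) (KB θ : Set (PM X)) : Prop :=
  I.map KB ⊆ θ

section Lift

variable {X Y : Type} [Fintype X] [Fintype Y]

/-- A constraint on `Δ_X` viewed as a constraint on `Δ_{X×Y}`: `KB↑`. -/
def liftKB (Y : Type) [Fintype Y] (KB : Set (PM X)) : Set (PM (X × Y)) :=
  {μ | margFst μ ∈ KB}

/-- `proj_X(B) = {μ_X : μ ∈ B}`. -/
def projFst (B : Set (PM (X × Y))) : Set (PM X) := margFst '' B

/-- `ψ ⊆ Δ_{X×Y}` is `X`-conservative over `KB ⊆ Δ_X`. -/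
def Conservative (KB : Set (PM X)) (ψ : Set (PM (X × Y))) : Prop :=
  projFst (liftKB Y KB ∩ ψ) = KB

end Lift

/-- Robustness of a finitary inference procedure. -/
def Robust (I : ∀ (X : Type) [Fintype X], InfProc X) : Prop :=
  ∀ (X Y : Type) [Fintype X] [Fintype Y], ∀ KB φ : Set (PM X),
    KB ∈ (I X).dom → ∀ ψ : Set (PM (X × Y)), Conservative KB ψ →
      (Infers (I X) KB φ ↔ Infers (I (X × Y)) (liftKB Y KB ∩ ψ) (liftKB Y φ))

/-- An inference procedure is essentially entailment. -/
def EssEntail {X : Type} [Fintype X] (I : InfProc X) : Prop :=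
  ∀ KB ∈ I.dom, ∀ (S : Set X) (α β : ℝ),
    Infers I KB {μ | α < μ.prob S ∧ μ.prob S < β} →
    KB ⊆ {μ | α ≤ μ.prob S ∧ μ.prob S ≤ β}

def DI1 (I : ∀ (X : Type) [Fintype X], InfProc X) : Prop :=
  ∀ (X : Type) [Fintype X], ∀ (S : Set X) (α β : ℝ), α ≤ β →
    {μ : PM X | α ≤ μ.prob S ∧ μ.prob S ≤ β} ∈ (I X).dom

def DI2 (I : ∀ (X : Type) [Fintype X], InfProc X) : Prop :=
  ∀ (X Y : Type) [Fintype X] [Fintype Y], ∀ KB : Set (PM X),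
    KB ∈ (I X).dom → liftKB Y KB ∈ (I (X × Y)).dom

def DI3 (I : ∀ (X : Type) [Fintype X], InfProc X) : Prop :=
  ∀ (X : Type) [Fintype X], ∀ KB₁ KB₂ : Set (PM X),
    KB₁ ∈ (I X).dom → KB₂ ∈ (I X).dom → KB₁ ∩ KB₂ ∈ (I X).dom

/-- An `X`-`Y` embedding: a homomorphism of set algebras. -/
structure Emb (X Y : Type) where
  f : Set X → Set Y
  map_union : ∀ S T, f (S ∪ T) = f S ∪ f T
  map_compl : ∀ S, f Sᶜ = (f S)ᶜ

/-- A faithful embedding. -/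
def Emb.Faithful {X Y : Type} (e : Emb X Y) : Prop :=
  ∀ S T : Set X, S ⊆ T ↔ e.f S ⊆ e.f T

section Embeddings

variable {X Y : Type} [Fintype X] [Fintype Y]

/-- `μ` and `ν` correspond under `f`. -/
def Corr (e : Emb X Y) (μ : PM X) (ν : PM Y) : Prop :=
  ∀ S : Set X, μ.prob S = ν.prob (e.f S)

/-- `f*(D)`, the union over `μ ∈ D` of the measures corresponding to `μ`. -/
def fstar (e : Emb X Y) (D : Set (PM X)) : Set (PM Y) :=
  {ν | ∃ μ ∈ D, Corr e μ ν}

/-- Sets of measures `D_X` and `D_Y` correspond under `f`. -/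
def SetCorr (e : Emb X Y) (DX : Set (PM X)) (DY : Set (PM Y)) : Prop :=
  (∀ ν ∈ DY, ∃ μ ∈ DX, Corr e μ ν) ∧ (∀ μ ∈ DX, ∃ ν ∈ DY, Corr e μ ν)

end Embeddings

/-- Representation independence of a finitary inference procedure. -/
def RepInd (I : ∀ (X : Type) [Fintype X], InfProc X) : Prop :=
  ∀ (X Y : Type) [Fintype X] [Fintype Y] (e : Emb X Y), e.Faithful →
    (∀ KB : Set (PM X), KB ∈ (I X).dom ↔ fstar e KB ∈ (I Y).dom) ∧
    (∀ KB : Set (PM X), KB ∈ (I X).dom → ∀ θ : Set (PM X),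
      (Infers (I X) KB θ ↔ Infers (I Y) (fstar e KB) (fstar e θ)))

def DI4 (I : ∀ (X : Type) [Fintype X], InfProc X) : Prop :=
  ∀ (X Y : Type) [Fintype X] [Fintype Y] (e : Emb X Y), e.Faithful →
    ∀ KB : Set (PM X), (KB ∈ (I X).dom ↔ fstar e KB ∈ (I Y).dom)

/-- `A ⇔ B` for sets of measures. -/
def iffSet {α : Type*} (A B : Set α) : Set α := (A ∩ B) ∪ (Aᶜ ∩ Bᶜ)

def DI5 (I : ∀ (X : Type) [Fintype X], InfProc X) : Prop :=
  ∀ (X Y : Type) [Fintype X] [Fintype Y] (KB : Set (PM (X × Y))) (e : Emb X Y),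
    e.Faithful → KB ∈ (I (X × Y)).dom → ∀ φ₁ : Set (PM X),
      KB ∩ iffSet (liftKB Y φ₁) {μ | margSnd μ ∈ fstar e φ₁} ∈ (I (X × Y)).dom

/-- Minimal default independence. -/
def MDI (I : ∀ (X : Type) [Fintype X], InfProc X) : Prop :=
  ∀ (X Y : Type) [Fintype X] [Fintype Y], ∀ KB : Set (PM X), ∀ (S : Set X) (T : Set Y),
    liftKB Y KB ∈ (I (X × Y)).dom →
    Infers (I (X × Y)) (liftKB Y KB)
      {μ | μ.prob (S ×ˢ T) = μ.prob (S ×ˢ (Set.univ : Set Y)) * μ.prob ((Set.univ : Set X) ×ˢ T)}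

/-- `KB` depends only on `S₁, …, S_k`. -/
def DependsOnly {X : Type} [Fintype X] {k : ℕ} (KB : Set (PM X)) (S : Fin k → Set X) : Prop :=
  ∀ μ μ' : PM X, (∀ i, μ.prob (S i) = μ'.prob (S i)) → (μ ∈ KB ↔ μ' ∈ KB)

/-- An atom over `S₁, …, S_k`. -/
def Atom {X : Type} {k : ℕ} (S : Fin k → Set X) (c : Fin k → Bool) : Set X :=
  ⋂ i, (if c i then S i else (S i)ᶜ)

section KL

variable {X : Type} [Fintype X]

/-- Absolute continuity of pmfs. -/
def AbsCont (μ' μ : PM X) : Prop := ∀ x, μ.pm x = 0 → μ'.pm x = 0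

/-- Relative entropy `D(μ'‖μ) ∈ [0,∞]` (it is `⊤` unless `μ' ≪ μ`). -/
noncomputable def KL (μ' μ : PM X) : EReal := by
  classical
  exact if AbsCont μ' μ then
    ((∑ x, μ'.pm x * Real.log (μ'.pm x / μ.pm x) : ℝ) : EReal)
  else ⊤

/-- The relative-entropy projection `μ|θ`. -/
def klProj (μ : PM X) (θ : Set (PM X)) : Set (PM X) :=
  {μ' | μ' ∈ θ ∧ KL μ' μ ≠ ⊤ ∧ ∀ μ'' ∈ θ, KL μ' μ ≤ KL μ'' μ}

/-- `D|θ = ⋃_{μ ∈ D} μ|θ`. -/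
def DProj (D : Set (PM X)) (θ : Set (PM X)) : Set (PM X) :=
  ⋃ μ ∈ D, klProj μ θ

end KL

section Products

variable {n : ℕ} {X : Fin n → Type} [∀ i, Fintype (X i)]

/-- The `i`-th marginal of a measure on a finite product. -/
noncomputable def margPi (μ : PM (∀ i, X i)) (i : Fin n) : PM (X i) where
  pm a := μ.prob {x | x i = a}
  nonneg a := PM.prob_nonneg _ _
  total := by
    classical
    unfold PM.prob
    rw [Finset.sum_comm]
    have h : ∀ x : (∀ i, X i),
        (∑ a, ({y : ∀ j, X j | y i = a}).indicator μ.pm x) = μ.pm x := by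
      intro x
      simp [Set.indicator_apply]
    simp only [h]
    exact μ.total

/-- `μ` is a product measure on `X₁ × ⋯ × Xₙ`. -/
def IsProdPM (μ : PM (∀ i, X i)) : Prop :=
  ∃ μi : ∀ i, PM (X i), ∀ U : ∀ i, Set (X i),
    μ.prob {x | ∀ i, x i ∈ U i} = ∏ i, (μi i).prob (U i)

end Products

/-- The set `P_Π(X)` of product measures. -/
def PPi {n : ℕ} (X : Fin n → Type) [∀ i, Fintype (X i)] : Set (PM (∀ i, X i)) :=
  {μ | IsProdPM μ}

/-- `e` is a product embedding. -/
def IsProdEmb {n : ℕ} {X Y : Fin n → Type} (e : Emb (∀ i, X i) (∀ i, Y i)) : Prop :=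
  ∃ ei : ∀ i, Emb (X i) (Y i), ∀ S : Set (∀ i, X i),
    e.f S = ⋃ x ∈ S, {y | ∀ i, y i ∈ (ei i).f {x i}}


section Stmt18Aux

variable {n : ℕ} {X : Fin n → Type} [∀ i, Fintype (X i)]

lemma sum_prod_pi (G : ∀ i, X i → ℝ) :
    ∑ x : ∀ i, X i, ∏ i, G i (x i) = ∏ i, ∑ a, G i a := by
  classical
  exact (Fintype.prod_sum G).symm

lemma PM.ext' {Y : Type} [Fintype Y] {μ ν : PM Y} (h : μ.pm = ν.pm) : μ = ν := by
  cases μ; cases ν; cases h; rfl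

lemma prob_singleton {Y : Type} [Fintype Y] (μ : PM Y) (a : Y) : μ.prob {a} = μ.pm a := by
  classical
  simp [PM.prob, Set.indicator_apply]

open Classical in
lemma margPi_pm_eq (μ : PM (∀ i, X i)) (i : Fin n) (a : X i) :
    (margPi μ i).pm a = ∑ y, if y i = a then μ.pm y else 0 := by
  classical
  simp [margPi, PM.prob, Set.indicator_apply]

lemma marg_sum (μ : PM (∀ i, X i)) (i : Fin n) (w : X i → ℝ) :
    ∑ x, μ.pm x * w (x i) = ∑ a, (margPi μ i).pm a * w a := by
  classical
  simp only [margPi_pm_eq, Finset.sum_mul]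
  rw [Finset.sum_comm]
  refine Finset.sum_congr rfl fun x _ => ?_
  simp [ite_mul]

lemma prod_sum_weight (g : ∀ i, X i → ℝ) (hg : ∀ i, ∑ a, g i a = 1)
    (i₀ : Fin n) (f : X i₀ → ℝ) :
    ∑ x : ∀ i, X i, (∏ i, g i (x i)) * f (x i₀) = ∑ a, g i₀ a * f a := by
  classical
  set G : ∀ i, X i → ℝ := Function.update g i₀ (fun a => g i₀ a * f a) with hG
  have hGi₀ : G i₀ = fun a => g i₀ a * f a := Function.update_self _ _ _
  have hGne : ∀ i, i ≠ i₀ → G i = g i := fun i hi => Function.update_of_ne hi _ _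
  have key : ∀ x : ∀ i, X i, (∏ i, g i (x i)) * f (x i₀) = ∏ i, G i (x i) := by
    intro x
    rw [Finset.prod_eq_mul_prod_sdiff_singleton_of_mem (Finset.mem_univ i₀) (fun i => G i (x i)),
        Finset.prod_eq_mul_prod_sdiff_singleton_of_mem (Finset.mem_univ i₀) (fun i => g i (x i))]
    have h1 : G i₀ (x i₀) = g i₀ (x i₀) * f (x i₀) := by rw [hGi₀]
    have h2 : ∏ i ∈ Finset.univ \ {i₀}, G i (x i)
        = ∏ i ∈ Finset.univ \ {i₀}, g i (x i) :=
      Finset.prod_congr rfl fun i hi => by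
        rw [hGne i (by simpa using (Finset.mem_sdiff.mp hi).2)]
    rw [h1, h2]; ring
  simp only [key]
  rw [sum_prod_pi]
  rw [Finset.prod_eq_mul_prod_sdiff_singleton_of_mem (Finset.mem_univ i₀) (fun i => ∑ a, G i a)]
  have h2 : ∏ i ∈ Finset.univ \ {i₀}, ∑ a, G i a = 1 := by
    refine Finset.prod_eq_one fun i hi => ?_
    rw [hGne i (by simpa using (Finset.mem_sdiff.mp hi).2)]
    exact hg i
  rw [h2, hGi₀, mul_one]

end Stmt18Aux

/-- any measure in the relative-entropy projection of the
product priors onto a conjunction of componentwise constraints makes the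
components independent. -/
theorem stmt18 {n : ℕ} (X : Fin n → Type) [∀ i, Fintype (X i)]
    (KB : ∀ i, Set (PM (X i))) (S : ∀ i, Set (X i)) (μ' : PM (∀ i, X i))
    (h : μ' ∈ DProj (PPi X) (⋂ i, {μ : PM (∀ i, X i) | margPi μ i ∈ KB i})) :
    μ'.prob {x | ∀ i, x i ∈ S i} = ∏ i, (margPi μ' i).prob (S i) := by
  classical
  rw [DProj, Set.mem_iUnion₂] at h
  obtain ⟨μ, hμPPi, hθ, hfin, hmin⟩ := h
  obtain ⟨qi, hq⟩ := hμPPi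
  -- the prior is a pointwise product
  have hqpt : ∀ x, μ.pm x = ∏ i, (qi i).pm (x i) := by
    intro x
    have hx := hq (fun i => {x i})
    have hset : {y : ∀ i, X i | ∀ i, y i ∈ ({x i} : Set (X i))} = {x} := by
      ext y
      simp only [Set.mem_setOf_eq, Set.mem_singleton_iff, funext_iff]
    rw [hset, prob_singleton] at hx
    simpa [prob_singleton] using hx
  -- KL unfolds
  have hKL_eq : ∀ (ρ σ : PM (∀ i, X i)), AbsCont ρ σ →
      KL ρ σ = ((∑ x, ρ.pm x * Real.log (ρ.pm x / σ.pm x) : ℝ) : EReal) := by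
    intro ρ σ hh
    unfold KL
    rw [if_pos hh]
  have hac : AbsCont μ' μ := by
    by_contra hc
    apply hfin
    unfold KL
    rw [if_neg hc]
  -- marginals of μ'
  set mi : ∀ i, X i → ℝ := fun i => (margPi μ' i).pm with hmi
  have hmi_nonneg : ∀ i a, 0 ≤ mi i a := fun i a => (margPi μ' i).nonneg a
  have hmi_total : ∀ i, ∑ a, mi i a = 1 := fun i => (margPi μ' i).total
  have hple : ∀ (x : ∀ i, X i) (i : Fin n), μ'.pm x ≤ mi i (x i) := by
    intro x i
    have heq : mi i (x i) = ∑ y, if y i = x i then μ'.pm y else 0 := margPi_pm_eq μ' i (x i)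
    rw [heq]
    have := Finset.single_le_sum (f := fun y => if y i = x i then μ'.pm y else 0)
      (fun y _ => by by_cases hy : y i = x i <;> simp [hy, μ'.nonneg y]) (Finset.mem_univ x)
    simpa using this
  -- the candidate product measure
  set νf : (∀ i, X i) → ℝ := fun x => ∏ i, mi i (x i) with hνf
  have hνf_nonneg : ∀ x, 0 ≤ νf x := fun x => Finset.prod_nonneg fun i _ => hmi_nonneg i (x i)
  have hνtotal : ∑ x, νf x = 1 := by
    rw [hνf, sum_prod_pi]
    simp [hmi_total]
  set ν : PM (∀ i, X i) := ⟨νf, hνf_nonneg, hνtotal⟩ with hν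
  have hν0p : ∀ x, νf x = 0 → μ'.pm x = 0 := by
    intro x hx
    obtain ⟨i, -, hi⟩ := Finset.prod_eq_zero_iff.mp hx
    have h1 := hple x i
    have h2 := μ'.nonneg x
    rw [hi] at h1
    linarith
  have hq0ν : ∀ x, μ.pm x = 0 → νf x = 0 := by
    intro x hx
    rw [hqpt] at hx
    obtain ⟨i, -, hi⟩ := Finset.prod_eq_zero_iff.mp hx
    refine Finset.prod_eq_zero (Finset.mem_univ i) ?_
    have hall : ∀ y : ∀ j, X j, y i = x i → μ'.pm y = 0 := by
      intro y hy
      apply hac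
      rw [hqpt]
      exact Finset.prod_eq_zero (Finset.mem_univ i) (by rw [hy]; exact hi)
    rw [show mi i (x i) = ∑ y, if y i = x i then μ'.pm y else 0 from margPi_pm_eq μ' i (x i)]
    refine Finset.sum_eq_zero fun y _ => ?_
    by_cases hy : y i = x i
    · simp [hy, hall y hy]
    · simp [hy]
  -- marginals of ν agree with those of μ'
  have hmargν : ∀ i, margPi ν i = margPi μ' i := by
    intro i
    apply PM.ext'
    funext a
    have h1 : (margPi ν i).pm a = ∑ x, νf x * (if x i = a then (1:ℝ) else 0) := by
      rw [margPi_pm_eq]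
      refine Finset.sum_congr rfl fun x _ => ?_
      by_cases hx : x i = a <;> simp [hx, hν]
    rw [h1, hνf]
    rw [prod_sum_weight mi hmi_total i (fun b => if b = a then (1:ℝ) else 0)]
    have : ∀ b, mi i b * (if b = a then (1:ℝ) else 0) = if b = a then mi i b else 0 := by
      intro b; by_cases hb : b = a <;> simp [hb]
    simp only [this, Finset.sum_ite_eq', Finset.mem_univ, if_pos]
    rfl
  have hνθ : ν ∈ ⋂ i, {ρ : PM (∀ i, X i) | margPi ρ i ∈ KB i} := by
    rw [Set.mem_iInter] at hθ ⊢
    intro i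
    have := hθ i
    simp only [Set.mem_setOf_eq] at this ⊢
    rw [hmargν i]
    exact this
  have hacν : AbsCont ν μ := fun x hx => hq0ν x hx
  -- real-valued minimality
  have hle := hmin ν hνθ
  rw [hKL_eq μ' μ hac, hKL_eq ν μ hacν] at hle
  have hleR : (∑ x, μ'.pm x * Real.log (μ'.pm x / μ.pm x))
      ≤ ∑ x, ν.pm x * Real.log (ν.pm x / μ.pm x) := by exact_mod_cast hle
  -- positivity facts
  have hppos_facts : ∀ x : ∀ i, X i, 0 < μ'.pm x →
      0 < νf x ∧ 0 < μ.pm x := by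
    intro x hp
    constructor
    · rcases eq_or_lt_of_le (hνf_nonneg x) with h0 | h0
      · exfalso; have := hν0p x h0.symm; linarith
      · exact h0
    · rcases eq_or_lt_of_le ((μ.nonneg x)) with h0 | h0
      · exfalso; have := hac x h0.symm; linarith
      · exact h0
  have hmipos : ∀ (x : ∀ i, X i), 0 < νf x → ∀ i, 0 < mi i (x i) := by
    intro x hx i
    rcases eq_or_lt_of_le (hmi_nonneg i (x i)) with h0 | h0
    · exfalso
      have : νf x = 0 := Finset.prod_eq_zero (Finset.mem_univ i) h0.symm
      linarith
    · exact h0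
  have hqipos : ∀ (x : ∀ i, X i), 0 < μ.pm x → ∀ i, 0 < (qi i).pm (x i) := by
    intro x hx i
    rcases eq_or_lt_of_le ((qi i).nonneg (x i)) with h0 | h0
    · exfalso
      have : μ.pm x = 0 := by
        rw [hqpt]; exact Finset.prod_eq_zero (Finset.mem_univ i) h0.symm
      linarith
    · exact h0
  -- the cross term
  set w : ∀ i, X i → ℝ := fun i a => Real.log (mi i a / (qi i).pm a) with hw
  have hlogprod : ∀ x : ∀ i, X i, 0 < νf x → 0 < μ.pm x →
      Real.log (νf x / μ.pm x) = ∑ i, w i (x i) := by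
    intro x hν' hq'
    have h1 : νf x / μ.pm x = ∏ i, mi i (x i) / (qi i).pm (x i) := by
      rw [hνf, hqpt, Finset.prod_div_distrib]
    rw [h1]
    rw [Real.log_prod (fun i _ =>
      div_ne_zero (hmipos x hν' i).ne' (hqipos x hq' i).ne')]
  have hcrossp : ∀ x, μ'.pm x * Real.log (νf x / μ.pm x) = μ'.pm x * ∑ i, w i (x i) := by
    intro x
    rcases eq_or_lt_of_le (μ'.nonneg x) with h0 | hpos
    · rw [← h0]; ring
    · obtain ⟨hν', hq'⟩ := hppos_facts x hpos
      rw [hlogprod x hν' hq']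
  have hcrossν : ∀ x, νf x * Real.log (νf x / μ.pm x) = νf x * ∑ i, w i (x i) := by
    intro x
    rcases eq_or_lt_of_le (hνf_nonneg x) with h0 | hpos
    · rw [← h0]; ring
    · have hq' : 0 < μ.pm x := by
        rcases eq_or_lt_of_le (μ.nonneg x) with h0 | h0
        · exfalso; have := hq0ν x h0.symm; linarith
        · exact h0
      rw [hlogprod x hpos hq']
  have hsum_group : ∀ (ρ : PM (∀ i, X i)),
      ∑ x, ρ.pm x * ∑ i, w i (x i) = ∑ i, ∑ a, (margPi ρ i).pm a * w i a := by
    intro ρ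
    simp only [Finset.mul_sum]
    rw [Finset.sum_comm]
    exact Finset.sum_congr rfl fun i _ => marg_sum ρ i (w i)
  have hC : ∑ x, μ'.pm x * Real.log (νf x / μ.pm x)
      = ∑ x, νf x * Real.log (νf x / μ.pm x) := by
    calc ∑ x, μ'.pm x * Real.log (νf x / μ.pm x)
        = ∑ x, μ'.pm x * ∑ i, w i (x i) := Finset.sum_congr rfl fun x _ => hcrossp x
      _ = ∑ i, ∑ a, (margPi μ' i).pm a * w i a := hsum_group μ'
      _ = ∑ i, ∑ a, (margPi ν i).pm a * w i a := by
          refine Finset.sum_congr rfl fun i _ => ?_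
          rw [hmargν i]
      _ = ∑ x, ν.pm x * ∑ i, w i (x i) := (hsum_group ν).symm
      _ = ∑ x, νf x * Real.log (νf x / μ.pm x) :=
          Finset.sum_congr rfl fun x _ => (hcrossν x).symm
  -- chain rule pointwise
  have hchain : ∀ x, μ'.pm x * Real.log (μ'.pm x / μ.pm x)
      = μ'.pm x * Real.log (μ'.pm x / νf x) + μ'.pm x * Real.log (νf x / μ.pm x) := by
    intro x
    rcases eq_or_lt_of_le (μ'.nonneg x) with h0 | hpos
    · rw [← h0]; ring
    · obtain ⟨hν', hq'⟩ := hppos_facts x hpos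
      have hmul : μ'.pm x / νf x * (νf x / μ.pm x) = μ'.pm x / μ.pm x := by
        field_simp
      rw [← mul_add, ← Real.log_mul (div_ne_zero hpos.ne' hν'.ne')
        (div_ne_zero hν'.ne' hq'.ne'), hmul]
  -- so the "entropy gap" E ≤ 0
  have hE : ∑ x, μ'.pm x * Real.log (μ'.pm x / νf x) ≤ 0 := by
    have h1 : ∑ x, μ'.pm x * Real.log (μ'.pm x / μ.pm x)
        = ∑ x, μ'.pm x * Real.log (μ'.pm x / νf x)
          + ∑ x, μ'.pm x * Real.log (νf x / μ.pm x) := by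
      rw [← Finset.sum_add_distrib]
      exact Finset.sum_congr rfl fun x _ => hchain x
    have h2 : ν.pm = νf := rfl
    rw [h1, hC] at hleR
    simp only [h2] at hleR
    linarith
  -- Gibbs with equality: μ'.pm = νf
  set hgap : (∀ i, X i) → ℝ :=
    fun x => νf x - μ'.pm x + μ'.pm x * Real.log (μ'.pm x / νf x) with hgapdef
  have hgap_nonneg : ∀ x, 0 ≤ hgap x := by
    intro x
    rcases eq_or_lt_of_le (μ'.nonneg x) with h0 | hpos
    · simp [hgapdef, ← h0, hνf_nonneg x]
    · have hν' := (hppos_facts x hpos).1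
      have h1 : Real.log (νf x / μ'.pm x) ≤ νf x / μ'.pm x - 1 :=
        Real.log_le_sub_one_of_pos (div_pos hν' hpos)
      have h2 : Real.log (μ'.pm x / νf x) = -Real.log (νf x / μ'.pm x) := by
        rw [← Real.log_inv, inv_div]
      have h3 : μ'.pm x * (νf x / μ'.pm x) = νf x := by field_simp
      have h4 : μ'.pm x * Real.log (νf x / μ'.pm x) ≤ νf x - μ'.pm x := by
        calc μ'.pm x * Real.log (νf x / μ'.pm x)
            ≤ μ'.pm x * (νf x / μ'.pm x - 1) := by
              exact mul_le_mul_of_nonneg_left h1 hpos.le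
          _ = νf x - μ'.pm x := by rw [mul_sub, h3]; ring
      simp only [hgapdef, h2]
      linarith
  have hgap_sum : ∑ x, hgap x ≤ 0 := by
    have : ∑ x, hgap x = (∑ x, νf x) - (∑ x, μ'.pm x)
        + ∑ x, μ'.pm x * Real.log (μ'.pm x / νf x) := by
      simp only [hgapdef]
      rw [Finset.sum_add_distrib, Finset.sum_sub_distrib]
    rw [this, hνtotal, μ'.total]
    linarith
  have hgap_zero : ∀ x, hgap x = 0 := by
    intro x
    have hz : ∑ x, hgap x = 0 :=
      le_antisymm hgap_sum (Finset.sum_nonneg fun x _ => hgap_nonneg x)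
    have := (Finset.sum_eq_zero_iff_of_nonneg fun x _ => hgap_nonneg x).mp hz
    exact this x (Finset.mem_univ x)
  have hpeq : ∀ x, μ'.pm x = νf x := by
    intro x
    rcases eq_or_lt_of_le (μ'.nonneg x) with h0 | hpos
    · have := hgap_zero x
      simp only [hgapdef, ← h0] at this
      simp only [← h0]
      rw [sub_zero] at this
      simpa using this.symm
    · have hν' := (hppos_facts x hpos).1
      by_contra hne
      have hdivne : νf x / μ'.pm x ≠ 1 := fun hh =>
        hne ((div_eq_one_iff_eq hpos.ne').mp hh).symm
      have h1 : Real.log (νf x / μ'.pm x) < νf x / μ'.pm x - 1 :=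
        Real.log_lt_sub_one_of_pos (div_pos hν' hpos) hdivne
      have h2 : Real.log (μ'.pm x / νf x) = -Real.log (νf x / μ'.pm x) := by
        rw [← Real.log_inv, inv_div]
      have h3 : μ'.pm x * (νf x / μ'.pm x) = νf x := by field_simp
      have h4 : μ'.pm x * Real.log (νf x / μ'.pm x) < νf x - μ'.pm x := by
        calc μ'.pm x * Real.log (νf x / μ'.pm x)
            < μ'.pm x * (νf x / μ'.pm x - 1) := by
              exact (mul_lt_mul_iff_right₀ hpos).mpr h1
          _ = νf x - μ'.pm x := by rw [mul_sub, h3]; ring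
      have := hgap_zero x
      simp only [hgapdef, h2] at this
      linarith
  -- conclusion
  have hbox : ∀ x : ∀ i, X i, Set.indicator {y : ∀ i, X i | ∀ i, y i ∈ S i} μ'.pm x
      = ∏ i, (S i).indicator (mi i) (x i) := by
    intro x
    by_cases hx : ∀ i, x i ∈ S i
    · rw [Set.indicator_of_mem (show x ∈ {y : ∀ i, X i | ∀ i, y i ∈ S i} from hx), hpeq x, hνf]
      exact Finset.prod_congr rfl fun i _ => (Set.indicator_of_mem (hx i) _).symm
    · rw [Set.indicator_of_notMem (show x ∉ {y : ∀ i, X i | ∀ i, y i ∈ S i} from hx)]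
      push_neg at hx
      obtain ⟨i, hi⟩ := hx
      exact (Finset.prod_eq_zero (Finset.mem_univ i) (Set.indicator_of_notMem hi _)).symm
  show ∑ x, Set.indicator {y : ∀ i, X i | ∀ i, y i ∈ S i} μ'.pm x = _
  simp only [hbox]
  rw [sum_prod_pi]
  rfl
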